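/- Let $0 < A < p$ be real numbers, let $\rho : (0,\infty) \to (0,\infty)$ be increasing with $\rho(x)/x^A$ decreasing, and let $(a_n)_{n\geq 1}$ be a decreasing sequence of nonnegative reals. Suppose that for every increasing function $h : [0,\infty) \to [0,\infty)$ with $h(0)=0$ such that $t \mapsto h(t^p)$ is convex, we have $\sum_{n\geq 1} h(a_n) \leq \sum_{n\geq 1} h(1/\rho(n))$. Then there exists a constant $C$ depending only on $p$ and $A$ such that $a_n \leq C/\rho(n)$ for all $n \geq 1$. -/

import Mathlib

open Filter Topology

/-- Sum comparison: `∑_{m=1}^n m^{-α} ≤ n^{1-α}/(1-α)` for `0 < α < 1`. -/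
lemma stmt1_sum_rpow (α : ℝ) (hα0 : 0 < α) (hα1 : α < 1) (n : ℕ) :
    ∑ m ∈ Finset.range n, ((m : ℝ) + 1) ^ (-α) ≤ (n : ℝ) ^ (1 - α) / (1 - α) := by
  have h1α : (0:ℝ) < 1 - α := by linarith
  induction n with
  | zero => simp [Real.zero_rpow h1α.ne']
  | succ n ih =>
    rw [Finset.sum_range_succ]
    set N : ℝ := (n : ℝ) with hN
    have hN0 : (0:ℝ) ≤ N := Nat.cast_nonneg n
    have hN1 : (0:ℝ) < N + 1 := by linarith
    have hber : (N / (N + 1)) ^ (1 - α) ≤ 1 + (1 - α) * (-(1 / (N + 1))) := by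
      have hs : (-1:ℝ) ≤ -(1 / (N + 1)) := by
        have : 1 / (N + 1) ≤ 1 := by
          rw [div_le_one hN1]; linarith
        linarith
      have hb := rpow_one_add_le_one_add_mul_self hs h1α.le (by linarith : 1 - α ≤ 1)
      have he : (1 : ℝ) + -(1 / (N + 1)) = N / (N + 1) := by
        field_simp; ring
      rwa [he] at hb
    have key : (1 - α) * (N + 1) ^ (-α) ≤ (N + 1) ^ (1 - α) - N ^ (1 - α) := by
      have hpos : (0:ℝ) < (N + 1) ^ (1 - α) := Real.rpow_pos_of_pos hN1 _
      have hpow : N ^ (1 - α) = (N / (N + 1)) ^ (1 - α) * (N + 1) ^ (1 - α) := by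
        rw [Real.div_rpow hN0 hN1.le]
        field_simp
      have hmul := mul_le_mul_of_nonneg_right hber hpos.le
      rw [← hpow] at hmul
      have hsplit : (N + 1) ^ (1 - α) = (N + 1) ^ (-α) * (N + 1) := by
        rw [show (1:ℝ) - α = -α + 1 by ring, Real.rpow_add hN1, Real.rpow_one]
      have e1 : (1 - α) * (N + 1) ^ (-α) = (1 - α) * (1 / (N + 1)) * (N + 1) ^ (1 - α) := by
        rw [hsplit]; field_simp
      rw [e1]
      nlinarith [hmul]
    have hcast : ((n + 1 : ℕ) : ℝ) = N + 1 := by push_cast; rfl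
    rw [hcast]
    rw [le_div_iff₀ h1α] at ih ⊢
    nlinarith [key, ih]

/-- upper bound `a n ≤ C / ρ n` from sum inequalities against test
functions `h` with `h(t^p)` convex. -/
theorem stmt1 (p A : ℝ) (hA : 0 < A) (hAp : A < p) :
    ∃ C > (0:ℝ), ∀ (ρ : ℝ → ℝ) (a : ℕ → ℝ),
      (∀ x : ℝ, 0 < x → 0 < ρ x) →
      MonotoneOn ρ (Set.Ioi 0) →
      (∀ x y : ℝ, 0 < x → x ≤ y → ρ y / y ^ A ≤ ρ x / x ^ A) →
      (∀ n, 0 ≤ a n) →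
      (∀ m n : ℕ, 1 ≤ m → m ≤ n → a n ≤ a m) →
      (∀ h : ℝ → ℝ, MonotoneOn h (Set.Ici 0) → h 0 = 0 →
        ConvexOn ℝ (Set.Ici 0) (fun t => h (t ^ p)) →
        ∑' n : ℕ, ENNReal.ofReal (h (a (n+1))) ≤
          ∑' n : ℕ, ENNReal.ofReal (h (1 / ρ ((n : ℝ) + 1)))) →
      ∀ n : ℕ, 1 ≤ n → a n ≤ C / ρ (n : ℝ) := by
  have hp : 0 < p := hA.trans hAp
  set α := A / p with hαdef
  have hα0 : 0 < α := div_pos hA hp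
  have hα1 : α < 1 := (div_lt_one hp).mpr hAp
  have h1α : (0:ℝ) < 1 - α := by linarith
  refine ⟨(1 + 1 / (1 - α)) ^ p, Real.rpow_pos_of_pos (by positivity) p, ?_⟩
  intro ρ a hρpos hρmono hρA ha0 hamono hsum n hn
  have hN1 : (1:ℝ) ≤ (n : ℝ) := by exact_mod_cast hn
  set N : ℝ := (n : ℝ) with hNdef
  have hNpos : (0:ℝ) < N := by linarith
  have hρn : 0 < ρ N := hρpos N hNpos
  set δ : ℝ := (1 / ρ N) ^ (1 / p) with hδdef
  have hδ0 : 0 < δ := Real.rpow_pos_of_pos (by positivity) _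
  set h : ℝ → ℝ := fun t => max (t ^ (1 / p) - δ) 0 with hhdef
  -- h is monotone on [0,∞)
  have hmono : MonotoneOn h (Set.Ici 0) := by
    intro x hx y _ hxy
    exact max_le_max (sub_le_sub_right
      (Real.rpow_le_rpow hx hxy (by positivity)) δ) le_rfl
  -- h 0 = 0
  have hzero : h 0 = 0 := by
    simp only [hhdef, Real.zero_rpow (one_div_ne_zero hp.ne'), zero_sub]
    exact max_eq_right (by linarith)
  -- on [0,∞), h (t^p) = max (t - δ) 0
  have heq : ∀ t : ℝ, 0 ≤ t → h (t ^ p) = max (t - δ) 0 := by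
    intro t ht
    simp only [hhdef]
    rw [← Real.rpow_mul ht, mul_one_div_cancel hp.ne', Real.rpow_one]
  -- convexity of t ↦ h (t^p) on [0,∞)
  have hconvmax : ConvexOn ℝ (Set.Ici (0:ℝ)) (fun t => max (t - δ) 0) := by
    have h1 : ConvexOn ℝ (Set.Ici (0:ℝ)) (fun t : ℝ => t - δ) :=
      (convexOn_id (convex_Ici 0)).sub (concaveOn_const δ (convex_Ici 0))
    exact h1.sup (convexOn_const 0 (convex_Ici 0))
  have hconv : ConvexOn ℝ (Set.Ici (0:ℝ)) (fun t => h (t ^ p)) := by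
    refine ⟨convex_Ici 0, fun x hx y hy a' b' ha' hb' hab' => ?_⟩
    have hmem : a' • x + b' • y ∈ Set.Ici (0:ℝ) := (convex_Ici 0) hx hy ha' hb' hab'
    have hmem' : (0:ℝ) ≤ a' * x + b' * y := by simpa using hmem
    have hcm := hconvmax.2 hx hy ha' hb' hab'
    simp only [smul_eq_mul] at hcm ⊢
    rw [heq _ hmem', heq _ hx, heq _ hy]
    simpa using hcm
  have hkey := hsum h hmono hzero hconv
  -- lower bound for the left sum
  have hL : (n : ENNReal) * ENNReal.ofReal (h (a n)) ≤
      ∑' m : ℕ, ENNReal.ofReal (h (a (m+1))) := by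
    calc (n : ENNReal) * ENNReal.ofReal (h (a n))
        = ∑ m ∈ Finset.range n, ENNReal.ofReal (h (a n)) := by
          rw [Finset.sum_const, Finset.card_range, nsmul_eq_mul]
      _ ≤ ∑ m ∈ Finset.range n, ENNReal.ofReal (h (a (m+1))) := by
          refine Finset.sum_le_sum fun m hm => ENNReal.ofReal_le_ofReal ?_
          exact hmono (Set.mem_Ici.mpr (ha0 n)) (Set.mem_Ici.mpr (ha0 (m+1)))
            (hamono (m+1) n (Nat.succ_le_succ (Nat.zero_le m)) (Finset.mem_range.mp hm))
      _ ≤ ∑' m : ℕ, ENNReal.ofReal (h (a (m+1))) := ENNReal.sum_le_tsum _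
  -- the right sum is supported on m < n
  have hsupp : ∀ m : ℕ, m ∉ Finset.range n → ENNReal.ofReal (h (1 / ρ ((m:ℝ)+1))) = 0 := by
    intro m hm
    have hnm : N ≤ (m:ℝ) + 1 := by
      have : n ≤ m := by simpa using Finset.mem_range.not.mp hm
      have : (n:ℝ) ≤ (m:ℝ) := by exact_mod_cast this
      linarith
    have hρm : ρ N ≤ ρ ((m:ℝ)+1) :=
      hρmono (Set.mem_Ioi.mpr hNpos) (Set.mem_Ioi.mpr (by linarith)) hnm
    have hρmpos : 0 < ρ ((m:ℝ)+1) := hρpos _ (by linarith)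
    have hle : (1 / ρ ((m:ℝ)+1)) ^ (1/p) ≤ δ := by
      rw [hδdef]
      exact Real.rpow_le_rpow (by positivity)
        (one_div_le_one_div_of_le hρn hρm) (by positivity)
    have hz : h (1 / ρ ((m:ℝ)+1)) = 0 := max_eq_right (by linarith)
    rw [ENNReal.ofReal_eq_zero]
    exact hz.le
  -- term bound for m < n
  have hterm : ∀ m : ℕ, m ∈ Finset.range n →
      h (1 / ρ ((m:ℝ)+1)) ≤ δ * N ^ α * ((m:ℝ)+1) ^ (-α) := by
    intro m hm
    set M : ℝ := (m:ℝ) + 1 with hMdef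
    have hM0 : (0:ℝ) < M := by positivity
    have hMN : M ≤ N := by
      have : m + 1 ≤ n := Finset.mem_range.mp hm
      have : ((m:ℕ) + 1 : ℝ) ≤ (n:ℝ) := by exact_mod_cast this
      simpa [hMdef] using this
    have hρM : 0 < ρ M := hρpos M hM0
    have hdiv := hρA M N hM0 hMN
    have hMA : (0:ℝ) < M ^ A := Real.rpow_pos_of_pos hM0 A
    have hNA : (0:ℝ) < N ^ A := Real.rpow_pos_of_pos hNpos A
    rw [div_le_div_iff₀ hNA hMA] at hdiv
    have hx : 1 / ρ M ≤ (N / M) ^ A * (1 / ρ N) := by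
      rw [Real.div_rpow hNpos.le hM0.le, div_mul_div_comm, mul_one,
        div_le_div_iff₀ hρM (by positivity)]
      nlinarith [hdiv]
    have h1 : (1 / ρ M) ^ (1/p) ≤ ((N / M) ^ A * (1 / ρ N)) ^ (1/p) :=
      Real.rpow_le_rpow (by positivity) hx (by positivity)
    have h2 : ((N / M) ^ A * (1 / ρ N)) ^ (1/p) = (N / M) ^ α * δ := by
      rw [Real.mul_rpow (by positivity) (by positivity), ← Real.rpow_mul (by positivity),
        mul_one_div, hδdef]
    have h3 : (N / M) ^ α = N ^ α * M ^ (-α) := by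
      rw [Real.div_rpow hNpos.le hM0.le, Real.rpow_neg hM0.le, div_eq_mul_inv]
    have : h (1 / ρ M) ≤ (1 / ρ M) ^ (1/p) :=
      max_le (by linarith [hδ0]) (by positivity)
    calc h (1 / ρ M) ≤ (1 / ρ M) ^ (1/p) := this
      _ ≤ (N / M) ^ α * δ := by rw [← h2]; exact h1
      _ = δ * N ^ α * M ^ (-α) := by rw [h3]; ring
  -- upper bound for the right sum
  have hR : (∑' m : ℕ, ENNReal.ofReal (h (1 / ρ ((m:ℝ)+1)))) ≤
      ENNReal.ofReal (1 / (1 - α) * N * δ) := by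
    rw [tsum_eq_sum hsupp]
    have hb : ∀ m ∈ Finset.range n, ENNReal.ofReal (h (1 / ρ ((m:ℝ)+1))) ≤
        ENNReal.ofReal (δ * N ^ α * ((m:ℝ)+1) ^ (-α)) :=
      fun m hm => ENNReal.ofReal_le_ofReal (hterm m hm)
    calc ∑ m ∈ Finset.range n, ENNReal.ofReal (h (1 / ρ ((m:ℝ)+1)))
        ≤ ∑ m ∈ Finset.range n, ENNReal.ofReal (δ * N ^ α * ((m:ℝ)+1) ^ (-α)) :=
          Finset.sum_le_sum hb
      _ = ENNReal.ofReal (∑ m ∈ Finset.range n, δ * N ^ α * ((m:ℝ)+1) ^ (-α)) := by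
          rw [ENNReal.ofReal_sum_of_nonneg]
          intro m _
          positivity
      _ ≤ ENNReal.ofReal (1 / (1 - α) * N * δ) := by
          refine ENNReal.ofReal_le_ofReal ?_
          rw [← Finset.mul_sum]
          have hs := stmt1_sum_rpow α hα0 hα1 n
          have hNN : N ^ α * N ^ (1 - α) = N := by
            rw [← Real.rpow_add hNpos]
            norm_num
          calc δ * N ^ α * (∑ m ∈ Finset.range n, ((m:ℝ)+1) ^ (-α))
              ≤ δ * N ^ α * ((n:ℝ) ^ (1 - α) / (1 - α)) := by
                refine mul_le_mul_of_nonneg_left hs (by positivity)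
            _ = 1 / (1 - α) * (N ^ α * N ^ (1 - α)) * δ := by
                rw [← hNdef]; ring
            _ = 1 / (1 - α) * N * δ := by rw [hNN]
  -- combine
  have hcomb : (n : ENNReal) * ENNReal.ofReal (h (a n)) ≤
      ENNReal.ofReal (1 / (1 - α) * N * δ) := le_trans hL (le_trans hkey hR)
  have hreal : N * h (a n) ≤ 1 / (1 - α) * N * δ := by
    have h1 : (n : ENNReal) * ENNReal.ofReal (h (a n)) = ENNReal.ofReal (N * h (a n)) := by
      rw [ENNReal.ofReal_mul hNpos.le, ENNReal.ofReal_natCast]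
    rw [h1] at hcomb
    exact (ENNReal.ofReal_le_ofReal_iff (by positivity)).mp hcomb
  have hha : h (a n) ≤ 1 / (1 - α) * δ := by
    have := (mul_le_mul_iff_right₀ hNpos).mp (by linarith [hreal] : N * h (a n) ≤ N * (1 / (1 - α) * δ))
    exact this
  have hroot : (a n) ^ (1/p) ≤ (1 + 1 / (1 - α)) * δ := by
    have : (a n) ^ (1/p) - δ ≤ 1 / (1 - α) * δ := le_trans (le_max_left _ _) hha
    linarith
  have hfin : a n ≤ ((1 + 1 / (1 - α)) * δ) ^ p := by
    have h1 : a n = ((a n) ^ (1/p)) ^ p := by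
      rw [← Real.rpow_mul (ha0 n), one_div_mul_cancel hp.ne', Real.rpow_one]
    rw [h1]
    exact Real.rpow_le_rpow (Real.rpow_nonneg (ha0 n) _) hroot hp.le
  have hδp : δ ^ p = 1 / ρ N := by
    rw [hδdef, ← Real.rpow_mul (by positivity), one_div_mul_cancel hp.ne', Real.rpow_one]
  calc a n ≤ ((1 + 1 / (1 - α)) * δ) ^ p := hfin
    _ = (1 + 1 / (1 - α)) ^ p * δ ^ p := Real.mul_rpow (by positivity) hδ0.le
    _ = (1 + 1 / (1 - α)) ^ p * (1 / ρ N) := by rw [hδp]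
    _ = (1 + 1 / (1 - α)) ^ p / ρ N := by rw [mul_one_div]
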